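/- For any ε ∈ (0,1) there exists a positive constant C_ε such that for all t ≥ 0: |U^r(t,x) − u₊| ≤ C_ε (1+t)^{−1+ε} e^{−ε|x−λ₊t|} whenever x ≥ λ₊ t, and |U^r(t,x) − u₋| ≤ C_ε (1+t)^{−1+ε} e^{−ε|x−λ₋t|} whenever x ≤ λ₋ t. -/

import Mathlib

open Real MeasureTheory Filter Set

/-- The smooth monotone initial datum `w₀(x) = (w₋+w₊)/2 + ((w₊−w₋)/2)·tanh x`. -/
noncomputable def w0 (wm wp x : ℝ) : ℝ := (wm + wp) / 2 + ((wp - wm) / 2) * Real.tanh x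

lemma tanh_formula' (y : ℝ) : Real.tanh y = (Real.exp (2*y) - 1)/(Real.exp (2*y) + 1) := by
  rw [Real.tanh_eq_sinh_div_cosh, Real.sinh_eq, Real.cosh_eq]
  have h := Real.exp_pos y
  have h2 : Real.exp (2*y) = Real.exp y * Real.exp y := by rw [← Real.exp_add]; ring_nf
  rw [Real.exp_neg, h2]
  field_simp

lemma exp_cancel' (y : ℝ) : Real.exp (-(2*y)) * Real.exp (2*y) = 1 := by
  rw [← Real.exp_add]; ring_nf; exact Real.exp_zero

lemma tanh_mem' (y : ℝ) : Real.tanh y ∈ Set.Icc (-1:ℝ) 1 := by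
  rw [tanh_formula']
  have h3 : (0:ℝ) < Real.exp (2*y) + 1 := by positivity
  constructor
  · rw [le_div_iff₀ h3]; nlinarith [Real.exp_pos (2*y)]
  · rw [div_le_iff₀ h3]; nlinarith [Real.exp_pos (2*y)]

lemma tanh_lb' (y : ℝ) (hy : 0 ≤ y) : Real.exp (-(2*y)) ≤ 1 - Real.tanh y := by
  have h2 := exp_cancel' y
  have h3 : (0:ℝ) < Real.exp (2*y) + 1 := by positivity
  have hgoal : 1 - (Real.exp (2*y) - 1)/(Real.exp (2*y) + 1) = 2/(Real.exp (2*y) + 1) := by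
    field_simp
    norm_num
  rw [tanh_formula', hgoal, le_div_iff₀ h3]
  have hle1 : Real.exp (-(2*y)) ≤ 1 := Real.exp_le_one_iff.mpr (by linarith)
  nlinarith

lemma tanh_ub' (y : ℝ) (hy : 0 ≤ y) : 1 - Real.tanh y ≤ 2 * Real.exp (-(2*y)) := by
  have h2 := exp_cancel' y
  have h3 : (0:ℝ) < Real.exp (2*y) + 1 := by positivity
  have hgoal : 1 - (Real.exp (2*y) - 1)/(Real.exp (2*y) + 1) = 2/(Real.exp (2*y) + 1) := by
    field_simp
    norm_num
  rw [tanh_formula', hgoal, div_le_iff₀ h3]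
  nlinarith [Real.exp_pos (-(2*y))]

lemma key_est' (A ε t z y : ℝ) (hA : 0 < A) (hε : 0 < ε) (hε1 : ε < 1)
    (ht : 0 ≤ t) (hz : 0 ≤ z) (hyz : z ≤ y)
    (hty : t * (A/2 * Real.exp (-(2*y))) ≤ y - z) :
    Real.exp (-(2*y)) ≤ (1 + 2/(A*ε)) * (1+t) ^ (-1+ε : ℝ) * Real.exp (-(ε*z)) := by
  have hy0 : 0 ≤ y := le_trans hz hyz
  have hexp1 := exp_cancel' y
  have hE := Real.exp_pos (2*y)
  have ht2 : t ≤ 2/A * y * Real.exp (2*y) := by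
    have h4 : t * (A/2 * Real.exp (-(2*y))) ≤ y := by linarith
    have h5 := mul_le_mul_of_nonneg_right h4 hE.le
    have h6 : t * (A/2 * Real.exp (-(2*y))) * Real.exp (2*y) = A/2 * t := by
      linear_combination (A/2 * t) * hexp1
    rw [h6] at h5
    have h7 := mul_le_mul_of_nonneg_left h5 (by positivity : (0:ℝ) ≤ 2/A)
    have h8 : 2/A * (A/2 * t) = t := by field_simp
    rw [h8] at h7
    linarith
  have hyE : y ≤ 1/ε * Real.exp (ε*y) := by
    have h := Real.add_one_le_exp (ε*y)
    rw [show (1/ε) * Real.exp (ε*y) = Real.exp (ε*y)/ε by ring, le_div_iff₀ hε]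
    nlinarith
  have he1 : (1:ℝ) ≤ Real.exp ((2+ε)*y) := Real.one_le_exp (by nlinarith)
  have h1t : 1 + t ≤ (1 + 2/(A*ε)) * Real.exp ((2+ε)*y) := by
    have hc : (0:ℝ) ≤ 2/A * Real.exp (2*y) := by positivity
    have h7 := mul_le_mul_of_nonneg_right hyE hc
    have he2 : Real.exp (ε*y) * Real.exp (2*y) = Real.exp ((2+ε)*y) := by
      rw [← Real.exp_add]; ring_nf
    have heq : 1/ε * Real.exp (ε*y) * (2/A * Real.exp (2*y)) = 2/(A*ε) * Real.exp ((2+ε)*y) := by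
      rw [← he2]; field_simp
    rw [heq] at h7
    have h9 : t ≤ 2/(A*ε) * Real.exp ((2+ε)*y) := by nlinarith
    nlinarith [mul_le_mul_of_nonneg_left he1 (by positivity : (0:ℝ) ≤ 2/(A*ε))]
  have h1tpos : (0:ℝ) < 1 + t := by linarith
  have hBpos : (0:ℝ) ≤ 1 + 2/(A*ε) := by positivity
  have hB1 : (1:ℝ) ≤ 1 + 2/(A*ε) := by
    nlinarith [div_pos (by norm_num : (0:ℝ) < 2) (by positivity : (0:ℝ) < A*ε)]
  have hP : (1+t) ^ (1-ε : ℝ) ≤ (1 + 2/(A*ε)) * Real.exp ((2-ε)*y) := by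
    have h1 : (1+t) ^ (1-ε : ℝ) ≤ ((1 + 2/(A*ε)) * Real.exp ((2+ε)*y)) ^ (1-ε : ℝ) :=
      Real.rpow_le_rpow h1tpos.le h1t (by linarith)
    have h2 : ((1 + 2/(A*ε)) * Real.exp ((2+ε)*y)) ^ (1-ε : ℝ)
        = (1 + 2/(A*ε)) ^ (1-ε : ℝ) * Real.exp ((2+ε)*y*(1-ε)) := by
      rw [Real.mul_rpow hBpos (Real.exp_pos _).le, ← Real.exp_mul]
    have h3 : (1 + 2/(A*ε)) ^ (1-ε : ℝ) ≤ 1 + 2/(A*ε) := by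
      calc (1 + 2/(A*ε)) ^ (1-ε : ℝ) ≤ (1 + 2/(A*ε)) ^ (1:ℝ) :=
            Real.rpow_le_rpow_of_exponent_le hB1 (by linarith)
        _ = 1 + 2/(A*ε) := Real.rpow_one _
    have h4 : Real.exp ((2+ε)*y*(1-ε)) ≤ Real.exp ((2-ε)*y) := by
      apply Real.exp_le_exp.mpr
      nlinarith [mul_nonneg (mul_nonneg hε.le hε.le) hy0]
    calc (1+t) ^ (1-ε : ℝ) ≤ (1 + 2/(A*ε)) ^ (1-ε : ℝ) * Real.exp ((2+ε)*y*(1-ε)) := h2 ▸ h1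
      _ ≤ (1 + 2/(A*ε)) * Real.exp ((2-ε)*y) :=
          mul_le_mul h3 h4 (Real.exp_pos _).le hBpos
  have hPpos : (0:ℝ) < (1+t) ^ (1-ε : ℝ) := Real.rpow_pos_of_pos h1tpos _
  have hneg : (1+t : ℝ) ^ (-1+ε : ℝ) = ((1+t) ^ (1-ε : ℝ))⁻¹ := by
    rw [show (-1+ε : ℝ) = -(1-ε) by ring, Real.rpow_neg h1tpos.le]
  rw [hneg, show (1 + 2/(A*ε)) * ((1+t) ^ (1-ε:ℝ))⁻¹ * Real.exp (-(ε*z))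
      = (1 + 2/(A*ε)) * Real.exp (-(ε*z)) / ((1+t) ^ (1-ε:ℝ)) by ring, le_div_iff₀ hPpos]
  have hchain := mul_le_mul_of_nonneg_left hP (Real.exp_pos (-(2*y))).le
  have heq2 : Real.exp (-(2*y)) * ((1 + 2/(A*ε)) * Real.exp ((2-ε)*y))
      = (1 + 2/(A*ε)) * Real.exp (-(ε*y)) := by
    rw [show Real.exp (-(2*y)) * ((1 + 2/(A*ε)) * Real.exp ((2-ε)*y))
        = (1 + 2/(A*ε)) * (Real.exp (-(2*y)) * Real.exp ((2-ε)*y)) by ring, ← Real.exp_add]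
    ring_nf
  rw [heq2] at hchain
  have hlast : Real.exp (-(ε*y)) ≤ Real.exp (-(ε*z)) := Real.exp_le_exp.mpr (by nlinarith)
  calc Real.exp (-(2*y)) * ((1+t) ^ (1-ε:ℝ)) ≤ (1 + 2/(A*ε)) * Real.exp (-(ε*y)) := hchain
    _ ≤ (1 + 2/(A*ε)) * Real.exp (-(ε*z)) := mul_le_mul_of_nonneg_left hlast hBpos

set_option maxHeartbeats 1000000 in
theorem stmt_6 (um up : ℝ) (hu : um < up)
    (f : ℝ → ℝ) (hf : ContDiff ℝ 3 f)
    (hconv : ∀ u ∈ Set.Icc um up, 0 < deriv (deriv f) u)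
    (linv : ℝ → ℝ) (hlinv : ∀ u ∈ Set.Icc um up, linv (deriv f u) = u)
    (Y : ℝ → ℝ → ℝ)
    (hY : ∀ t x : ℝ, 0 ≤ t → Y t x + t * w0 (deriv f um) (deriv f up) (Y t x) = x) :
    let Ur : ℝ → ℝ → ℝ := fun t x => linv (w0 (deriv f um) (deriv f up) (Y t x))
    ∀ ε : ℝ, 0 < ε → ε < 1 → ∃ C : ℝ, 0 < C ∧ ∀ t : ℝ, 0 ≤ t → ∀ x : ℝ,
      (deriv f up * t ≤ x →
        |Ur t x - up| ≤ C * (1 + t) ^ (-1 + ε) * Real.exp (-ε * |x - deriv f up * t|)) ∧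
      (x ≤ deriv f um * t →
        |Ur t x - um| ≤ C * (1 + t) ^ (-1 + ε) * Real.exp (-ε * |x - deriv f um * t|)) := by
  intro Ur ε hε hε1
  -- regularity facts
  have h1 : ContDiff ℝ 2 (deriv f) := (contDiff_succ_iff_deriv.mp (hf.of_le (by norm_num))).2.2
  have h2 : ContDiff ℝ 1 (deriv (deriv f)) :=
    (contDiff_succ_iff_deriv.mp (h1.of_le (by norm_num))).2.2
  have hdf : Differentiable ℝ (deriv f) := h1.differentiable (by norm_num)
  have hcont2 : Continuous (deriv (deriv f)) := h2.continuous
  -- minimum of f'' on [um, up]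
  obtain ⟨ξ, hξm, hξmin⟩ := isCompact_Icc.exists_isMinOn (Set.nonempty_Icc.mpr hu.le)
    (hcont2.continuousOn (s := Set.Icc um up))
  set c := deriv (deriv f) ξ with hcdef
  have hc : 0 < c := hconv ξ hξm
  have hcmin : ∀ u ∈ Set.Icc um up, c ≤ deriv (deriv f) u := fun u hu' => hξmin hu'
  -- quantitative monotonicity of deriv f on [um, up]
  have mono : ∀ a ∈ Set.Icc um up, ∀ b ∈ Set.Icc um up, a ≤ b →
      c * (b - a) ≤ deriv f b - deriv f a := by
    intro a ha b hb hab
    have hg : MonotoneOn (fun x => deriv f x - c * x) (Set.Icc um up) := by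
      apply monotoneOn_of_deriv_nonneg (convex_Icc um up)
      · exact ((hdf.continuous).sub (continuous_const.mul continuous_id)).continuousOn
      · intro x hx
        exact ((hdf x).sub (by fun_prop)).differentiableWithinAt
      · intro x hx
        rw [interior_Icc] at hx
        have hdx : deriv (fun x => deriv f x - c * x) x = deriv (deriv f) x - c := by
          rw [deriv_fun_sub (hdf x) (by fun_prop), deriv_const_mul _ differentiableAt_fun_id]
          simp
        rw [hdx]
        have := hcmin x (Set.Ioo_subset_Icc_self hx)
        linarith
    have := hg ha hb hab
    simp only at this
    linarith
  have hmm : um ∈ Set.Icc um up := ⟨le_refl _, hu.le⟩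
  have hpm : up ∈ Set.Icc um up := ⟨hu.le, le_refl _⟩
  have hA : 0 < deriv f up - deriv f um := by
    have := mono um hmm up hpm hu.le
    nlinarith
  set lm := deriv f um with hlm
  set lp := deriv f up with hlp
  set A := lp - lm with hAdef
  refine ⟨A/c * (1 + 2/(A*ε)), by positivity, ?_⟩
  intro t ht x
  have hYx := hY t x ht
  set y := Y t x with hydef
  have htm := tanh_mem' y
  -- w0 lies between lm and lp
  have hw_lb : lm ≤ w0 lm lp y := by
    simp only [w0]
    nlinarith [htm.1, htm.2]
  have hw_ub : w0 lm lp y ≤ lp := by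
    simp only [w0]
    nlinarith [htm.1, htm.2]
  -- the value u with deriv f u = w0 lm lp y
  obtain ⟨u, humem, hfu⟩ := intermediate_value_Icc hu.le (hdf.continuous.continuousOn)
    (⟨hw_lb, hw_ub⟩ : w0 lm lp y ∈ Set.Icc lm lp)
  have hUr : Ur t x = u := by
    show linv (w0 lm lp y) = u
    rw [← hfu, hlinv u humem]
  constructor
  · -- right side: x ≥ lp * t
    intro hx
    have hz : 0 ≤ x - lp * t := by linarith
    have hyz : x - lp * t ≤ y := by nlinarith [hw_ub, ht]
    have hy0 : 0 ≤ y := le_trans hz hyz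
    have hgap : t * (A/2 * Real.exp (-(2*y))) ≤ y - (x - lp * t) := by
      have hwf : lp - w0 lm lp y = A/2 * (1 - Real.tanh y) := by
        simp only [w0, hAdef]; ring
      have hlb := tanh_lb' y hy0
      have hYe : y - (x - lp * t) = t * (lp - w0 lm lp y) := by linarith
      rw [hYe, hwf]
      have hmul := mul_le_mul_of_nonneg_left hlb (mul_nonneg ht (by linarith : (0:ℝ) ≤ A/2))
      nlinarith [hmul]
    have hkey := key_est' A ε t (x - lp * t) y hA hε hε1 ht hz hyz hgap
    -- bound up - u
    have hup : c * (up - u) ≤ lp - deriv f u := by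
      have := mono u humem up hpm humem.2
      linarith
    rw [hfu] at hup
    have hwub : lp - w0 lm lp y ≤ A * Real.exp (-(2*y)) := by
      have hwf : lp - w0 lm lp y = A/2 * (1 - Real.tanh y) := by
        simp only [w0, hAdef]; ring
      have h2' := mul_le_mul_of_nonneg_left (tanh_ub' y hy0) (by linarith : (0:ℝ) ≤ A/2)
      rw [hwf]
      linarith [h2']
    have habs : |Ur t x - up| = up - u := by
      rw [hUr, abs_of_nonpos (by linarith [humem.2] : u - up ≤ 0)]
      ring
    rw [habs, abs_of_nonneg hz]
    have hstep : up - u ≤ A/c * Real.exp (-(2*y)) := by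
      rw [div_mul_eq_mul_div, le_div_iff₀ hc]
      linarith [hup, hwub]
    have hfin := mul_le_mul_of_nonneg_left hkey (by positivity : (0:ℝ) ≤ A/c)
    calc up - u ≤ A/c * Real.exp (-(2*y)) := hstep
      _ ≤ A/c * ((1 + 2/(A*ε)) * (1+t) ^ (-1+ε : ℝ) * Real.exp (-(ε*(x - lp*t)))) := hfin
      _ = A/c * (1 + 2/(A*ε)) * (1+t) ^ (-1+ε : ℝ) * Real.exp (-ε * (x - lp*t)) := by
          rw [neg_mul]; ring
  · -- left side: x ≤ lm * t
    intro hx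
    have hz : 0 ≤ lm * t - x := by linarith
    have hyz : lm * t - x ≤ -y := by nlinarith [hw_lb, ht]
    have hy0 : 0 ≤ -y := le_trans hz hyz
    have hgap : t * (A/2 * Real.exp (-(2*(-y)))) ≤ -y - (lm * t - x) := by
      have hwf : w0 lm lp y - lm = A/2 * (1 - Real.tanh (-y)) := by
        simp only [w0, hAdef, Real.tanh_neg]; ring
      have hlb := tanh_lb' (-y) hy0
      have hYe : -y - (lm * t - x) = t * (w0 lm lp y - lm) := by linarith
      rw [hYe, hwf]
      have hmul := mul_le_mul_of_nonneg_left hlb (mul_nonneg ht (by linarith : (0:ℝ) ≤ A/2))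
      nlinarith [hmul]
    have hkey := key_est' A ε t (lm * t - x) (-y) hA hε hε1 ht hz hyz hgap
    have hum : c * (u - um) ≤ deriv f u - lm := by
      have := mono um hmm u humem humem.1
      linarith
    rw [hfu] at hum
    have hwub : w0 lm lp y - lm ≤ A * Real.exp (-(2*(-y))) := by
      have hwf : w0 lm lp y - lm = A/2 * (1 - Real.tanh (-y)) := by
        simp only [w0, hAdef, Real.tanh_neg]; ring
      have h2' := mul_le_mul_of_nonneg_left (tanh_ub' (-y) hy0) (by linarith : (0:ℝ) ≤ A/2)
      rw [hwf]
      linarith [h2']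
    have habs : |Ur t x - um| = u - um := by
      rw [hUr, abs_of_nonneg (by linarith [humem.1] : 0 ≤ u - um)]
    have habs2 : |x - lm * t| = lm * t - x := by
      rw [abs_of_nonpos (by linarith : x - lm * t ≤ 0)]; ring
    rw [habs, habs2]
    have hstep : u - um ≤ A/c * Real.exp (-(2*(-y))) := by
      rw [div_mul_eq_mul_div, le_div_iff₀ hc]
      linarith [hum, hwub]
    have hfin := mul_le_mul_of_nonneg_left hkey (by positivity : (0:ℝ) ≤ A/c)
    calc u - um ≤ A/c * Real.exp (-(2*(-y))) := hstep
      _ ≤ A/c * ((1 + 2/(A*ε)) * (1+t) ^ (-1+ε : ℝ) * Real.exp (-(ε*(lm*t - x)))) := hfin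
      _ = A/c * (1 + 2/(A*ε)) * (1+t) ^ (-1+ε : ℝ) * Real.exp (-ε * (lm*t - x)) := by
          rw [neg_mul]; ring
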